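/- For s₁, s₂ ∈ {0,1} and any complex V, exp(V s₁ s₂) equals a 1-layer RBM function with a single {0,1}-valued hidden spin: there exist complex w₁, w₂, a₁, a₂, b, c such that exp(V s₁ s₂) = e^c ∑_{h∈{0,1}} exp(w₁ s₁ h + w₂ s₂ h + a₁ s₁ + a₂ s₂ + b h) for all s₁, s₂ ∈ {0,1}. -/

import Mathlib

theorem stmt15 (V : ℂ) :
    ∃ w₁ w₂ a₁ a₂ b c : ℂ,
      ∀ s₁ s₂ : ℂ, s₁ ∈ ({0, 1} : Set ℂ) → s₂ ∈ ({0, 1} : Set ℂ) →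
        Complex.exp (V * s₁ * s₂) =
          Complex.exp c * ∑ h : Bool,
            Complex.exp (w₁ * s₁ * (if h then 1 else 0) + w₂ * s₂ * (if h then 1 else 0) +
              a₁ * s₁ + a₂ * s₂ + b * (if h then 1 else 0)) := by
  set E := Complex.exp V with hEdef
  have hE0 : E ≠ 0 := Complex.exp_ne_zero V
  by_cases hE1 : E = 1
  · refine ⟨0, 0, 0, 0, 0, -Complex.log 2, ?_⟩
    rintro s₁ s₂ (rfl | rfl) (rfl | rfl) <;>
      simp [Fintype.sum_bool, Complex.exp_neg, Complex.exp_log (two_ne_zero (α := ℂ)),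
        mul_zero, mul_one, ← hEdef, hE1]
  · have h1 : (1 : ℂ) - E ≠ 0 := sub_ne_zero.mpr (Ne.symm hE1)
    obtain ⟨β, hq⟩ : ∃ β : ℂ, 4 * (1 - E) * β ^ 2 + (5 - 4 * E) * β + (1 - E) = 0 := by
      obtain ⟨r, hr⟩ : ∃ r : ℂ, r ^ 2 = 9 - 8 * E :=
        IsAlgClosed.exists_pow_nat_eq (9 - 8 * E) (n := 2) (by norm_num)
      refine ⟨(-(5 - 4 * E) + r) / (8 * (1 - E)), ?_⟩
      field_simp
      ring_nf
      linear_combination 4 * hr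
    have hβ0 : β ≠ 0 := by
      intro h
      rw [h] at hq
      simp at hq
      exact h1 (by linear_combination hq)
    have hβ1 : (1 : ℂ) + β ≠ 0 := by
      intro h
      have hb : β = -1 := by linear_combination h
      rw [hb] at hq
      exact hE0 (by linear_combination -hq)
    have hβ2 : (1 : ℂ) + 2 * β ≠ 0 := by
      intro h
      have hb : β = -(1/2) := by linear_combination h / 2
      rw [hb] at hq
      exact one_ne_zero (α := ℂ) (by linear_combination -2 * hq)
    refine ⟨Complex.log 2, Complex.log 2, Complex.log ((1 + β) / (1 + 2 * β)),
      Complex.log ((1 + β) / (1 + 2 * β)), Complex.log β, -Complex.log (1 + β), ?_⟩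
    have hw : Complex.exp (Complex.log 2) = 2 := Complex.exp_log (two_ne_zero (α := ℂ))
    have ha : Complex.exp (Complex.log ((1 + β) / (1 + 2 * β))) = (1 + β) / (1 + 2 * β) :=
      Complex.exp_log (div_ne_zero hβ1 hβ2)
    have hb : Complex.exp (Complex.log β) = β := Complex.exp_log hβ0
    have hc : Complex.exp (-Complex.log (1 + β)) = (1 + β)⁻¹ := by
      rw [Complex.exp_neg, Complex.exp_log hβ1]
    have key : ∀ s₁ s₂ : ℂ, s₁ ∈ ({0, 1} : Set ℂ) → s₂ ∈ ({0, 1} : Set ℂ) →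
        Complex.exp (V * s₁ * s₂) =
          Complex.exp (-Complex.log (1 + β)) * ∑ h : Bool,
            Complex.exp (Complex.log 2 * s₁ * (if h then 1 else 0) +
              Complex.log 2 * s₂ * (if h then 1 else 0) +
              Complex.log ((1 + β) / (1 + 2 * β)) * s₁ +
              Complex.log ((1 + β) / (1 + 2 * β)) * s₂ +
              Complex.log β * (if h then 1 else 0)) := by
      rintro s₁ s₂ (rfl | rfl) (rfl | rfl)
      · simp only [Fintype.sum_bool, if_true, if_false, mul_zero, mul_one, zero_mul, one_mul,
          add_zero, zero_add, Complex.exp_add, Complex.exp_zero, hw, ha, hb, hc, Bool.false_eq_true]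
        field_simp
        ring
      · simp only [Fintype.sum_bool, if_true, if_false, mul_zero, mul_one, zero_mul, one_mul,
          add_zero, zero_add, Complex.exp_add, Complex.exp_zero, hw, ha, hb, hc, Bool.false_eq_true]
        field_simp
        rw [eq_div_iff (by rw [mul_comm]; exact hβ2)]
        ring
      · simp only [Fintype.sum_bool, if_true, if_false, mul_zero, mul_one, zero_mul, one_mul,
          add_zero, zero_add, Complex.exp_add, Complex.exp_zero, hw, ha, hb, hc, Bool.false_eq_true]
        field_simp
        rw [eq_div_iff (by rw [mul_comm]; exact hβ2)]
        ring
      · simp only [Fintype.sum_bool, if_true, if_false, mul_zero, mul_one, zero_mul, one_mul,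
          add_zero, zero_add, Complex.exp_add, Complex.exp_zero, hw, ha, hb, hc, Bool.false_eq_true, ← hEdef]
        field_simp
        rw [eq_div_iff (pow_ne_zero 2 (by rw [mul_comm]; exact hβ2))]
        linear_combination (-1) * hq
    exact key
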